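/- Let d, k be positive natural numbers, σ > 0, ε : ℝ, f, g, y ∈ EuclideanSpace ℝ (Fin d), and π : Fin k → Equiv.Perm (Fin d). Write f⁽ⁱ⁾ = f ∘ π i and g⁽ⁱ⁾ = g ∘ π i, where (w∘π i) j = w (π i j) (the same permutation is applied to f and g). If ∑ i, Real.exp (⟪y, g⁽ⁱ⁾⟫ / σ²) ≤ Real.exp (−ε + (‖g‖² + 2·⟪f, g⟫) / (2σ²)), then ∑ i, Real.exp (−‖y − f⁽ⁱ⁾‖² / (2σ²)) ≥ Real.exp ε · ∑ i, Real.exp (−‖y − (f⁽ⁱ⁾ + g⁽ⁱ⁾)‖² / (2σ²)). -/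

import Mathlib

open RealInnerProductSpace

/-- The coordinate-permuted copy of a vector: `(permVec π w) j = w (π j)`. -/
def permVec {d : ℕ} (π : Equiv.Perm (Fin d)) (w : EuclideanSpace ℝ (Fin d)) :
    EuclideanSpace ℝ (Fin d) :=
  WithLp.toLp 2 (fun j => w (π j))

lemma inner_permVec {d : ℕ} (π : Equiv.Perm (Fin d)) (u v : EuclideanSpace ℝ (Fin d)) :
    ⟪permVec π u, permVec π v⟫ = ⟪u, v⟫ := by
  simp only [PiLp.inner_apply, permVec, RCLike.inner_apply, starRingEnd_apply, star_trivial]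
  exact Equiv.sum_comp π (fun j => v j * u j)

lemma norm_permVec {d : ℕ} (π : Equiv.Perm (Fin d)) (u : EuclideanSpace ℝ (Fin d)) :
    ‖permVec π u‖ = ‖u‖ := by
  have h := inner_permVec π u u
  rw [real_inner_self_eq_norm_sq, real_inner_self_eq_norm_sq] at h
  nlinarith [norm_nonneg (permVec π u), norm_nonneg u]

/-- **Sufficient condition for membership in `O*`.** If the sum of exponentiated inner products
with the permuted copies of `g` is small enough, then the shuffled mixture density at `y` for
the first dataset dominates `e^ε` times that for the second dataset. -/
theorem mem_Ostar_sufficient_condition {d k : ℕ} (hd : 0 < d) (hk : 0 < k)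
    {σ : ℝ} (hσ : 0 < σ) (ε : ℝ) (f g y : EuclideanSpace ℝ (Fin d))
    (π : Fin k → Equiv.Perm (Fin d))
    (hyp : ∑ i, Real.exp (⟪y, permVec (π i) g⟫ / σ ^ 2)
        ≤ Real.exp (-ε + (‖g‖ ^ 2 + 2 * ⟪f, g⟫) / (2 * σ ^ 2))) :
    ∑ i, Real.exp (-‖y - permVec (π i) f‖ ^ 2 / (2 * σ ^ 2))
      ≥ Real.exp ε *
        ∑ i, Real.exp (-‖y - (permVec (π i) f + permVec (π i) g)‖ ^ 2 / (2 * σ ^ 2)) := by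
  have hσ2 : (0:ℝ) < σ ^ 2 := by positivity
  set A : Fin k → ℝ := fun i => Real.exp (-‖y - permVec (π i) f‖ ^ 2 / (2 * σ ^ 2)) with hA
  set B : Fin k → ℝ := fun i => Real.exp (⟪y, permVec (π i) g⟫ / σ ^ 2) with hB
  set C : ℝ := Real.exp (-(‖g‖ ^ 2 + 2 * ⟪f, g⟫) / (2 * σ ^ 2)) with hC
  have key : ∀ i, Real.exp (-‖y - (permVec (π i) f + permVec (π i) g)‖ ^ 2 / (2 * σ ^ 2))
      = A i * B i * C := by
    intro i
    rw [hA, hB, hC, ← Real.exp_add, ← Real.exp_add]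
    congr 1
    have hexp : ‖y - (permVec (π i) f + permVec (π i) g)‖ ^ 2
        = ‖y - permVec (π i) f‖ ^ 2 - 2 * ⟪y - permVec (π i) f, permVec (π i) g⟫
          + ‖permVec (π i) g‖ ^ 2 := by
      have : y - (permVec (π i) f + permVec (π i) g)
          = (y - permVec (π i) f) - permVec (π i) g := by abel
      rw [this, norm_sub_sq_real]
    have hig : ⟪y - permVec (π i) f, permVec (π i) g⟫ = ⟪y, permVec (π i) g⟫ - ⟪f, g⟫ := by
      rw [inner_sub_left, inner_permVec]
    rw [hexp, hig, norm_permVec]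
    field_simp
    ring
  rw [Finset.sum_congr rfl (fun i _ => key i)]
  have hBne : ∀ i ∈ (Finset.univ : Finset (Fin k)), (0:ℝ) ≤ B i :=
    fun i _ => (Real.exp_pos _).le
  have hAB : ∑ i, A i * B i ≤ (∑ i, A i) * (∑ i, B i) := by
    rw [Finset.sum_mul]
    apply Finset.sum_le_sum
    intro i _
    exact mul_le_mul_of_nonneg_left
      (Finset.single_le_sum hBne (Finset.mem_univ i)) (Real.exp_pos _).le
  have hC0 : (0:ℝ) < C := Real.exp_pos _
  have hSA : (0:ℝ) ≤ ∑ i, A i := Finset.sum_nonneg fun i _ => (Real.exp_pos _).le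
  have hCE : C * Real.exp (-ε + (‖g‖ ^ 2 + 2 * ⟪f, g⟫) / (2 * σ ^ 2)) = Real.exp (-ε) := by
    rw [hC, ← Real.exp_add]; ring_nf
  have hAB2 : ∑ i, A i * B i ≤ (∑ i, A i) * Real.exp (-ε) / C := by
    have h1 : ∑ i, A i * B i ≤ (∑ i, A i) * Real.exp (-ε + (‖g‖ ^ 2 + 2 * ⟪f, g⟫) / (2 * σ ^ 2)) :=
      hAB.trans (mul_le_mul_of_nonneg_left hyp hSA)
    rw [le_div_iff₀ hC0]
    calc (∑ i, A i * B i) * C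
        ≤ ((∑ i, A i) * Real.exp (-ε + (‖g‖ ^ 2 + 2 * ⟪f, g⟫) / (2 * σ ^ 2))) * C :=
          mul_le_mul_of_nonneg_right h1 hC0.le
      _ = (∑ i, A i) * Real.exp (-ε) := by rw [mul_assoc, mul_comm _ C, hCE]
  calc Real.exp ε * ∑ i, A i * B i * C
      = Real.exp ε * C * ∑ i, A i * B i := by rw [← Finset.sum_mul]; ring
    _ ≤ Real.exp ε * C * ((∑ i, A i) * Real.exp (-ε) / C) := by
        apply mul_le_mul_of_nonneg_left hAB2; positivity
    _ = ∑ i, A i := by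
        rw [Real.exp_neg]
        field_simp
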